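/- Let H ⊆ F be complete sub-σ-algebras of a complete probability space, let X be an F-measurable ℝ^d-valued random variable whose conditional support supp_H X(ω) is nonempty for all ω, and let h : Ω × ℝ^d → ℝ be H ⊗ B(ℝ^d)-measurable and lower semicontinuous in its second variable. Then esssup_H h(·, X(·)) = sup_{x ∈ supp_H X} h(·, x) almost surely. -/

import Mathlib

open MeasureTheory Set Filter
open scoped Classical ENNReal

noncomputable section

/-- Scalar product on `ℝ^d`. -/
def dotp {d : ℕ} (a b : Fin d → ℝ) : ℝ := ∑ i, a i * b i

/-- `κ` is a regular version of the conditional law of `X` knowing the σ-algebra `H`. -/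
structure CondLaw {Ω : Type*} (H : MeasurableSpace Ω) {mΩ : MeasurableSpace Ω}
    (μ : Measure Ω) {E : Type*} [MeasurableSpace E] (X : Ω → E) (κ : Ω → Measure E) :
    Prop where
  isProb : ∀ ω, IsProbabilityMeasure (κ ω)
  meas : ∀ A : Set E, MeasurableSet A → Measurable[H] fun ω => κ ω A
  law : ∀ A : Set E, MeasurableSet A → ∀ B : Set Ω, MeasurableSet[H] B →
    ∫⁻ ω in B, κ ω A ∂μ = μ (B ∩ X ⁻¹' A)

/-- The support of the measure `κ ω`: the intersection of all closed sets of full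
measure (for a regular conditional law this is the conditional support). -/
def condSupp {Ω E : Type*} [TopologicalSpace E] [MeasurableSpace E]
    (κ : Ω → Measure E) (ω : Ω) : Set E :=
  ⋂₀ {A : Set E | IsClosed A ∧ κ ω A = 1}

/-- `γ` is (a version of) the conditional essential supremum of `X` knowing `H`. -/
def IsCondEssSup {Ω : Type*} (H : MeasurableSpace Ω) {mΩ : MeasurableSpace Ω}
    (μ : Measure Ω) (X : Ω → ℝ) (γ : Ω → EReal) : Prop :=
  Measurable[H] γ ∧ (∀ᵐ ω ∂μ, (X ω : EReal) ≤ γ ω) ∧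
    ∀ ζ : Ω → EReal, Measurable[H] ζ → (∀ᵐ ω ∂μ, (X ω : EReal) ≤ ζ ω) →
      ∀ᵐ ω ∂μ, γ ω ≤ ζ ω

/-- `γ` is (a version of) the conditional essential infimum of `X` knowing `H`. -/
def IsCondEssInf {Ω : Type*} (H : MeasurableSpace Ω) {mΩ : MeasurableSpace Ω}
    (μ : Measure Ω) (X : Ω → ℝ) (γ : Ω → EReal) : Prop :=
  Measurable[H] γ ∧ (∀ᵐ ω ∂μ, γ ω ≤ (X ω : EReal)) ∧
    ∀ ζ : Ω → EReal, Measurable[H] ζ → (∀ᵐ ω ∂μ, ζ ω ≤ (X ω : EReal)) →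
      ∀ᵐ ω ∂μ, ζ ω ≤ γ ω

/-- `p` is (a version of) the essential infimum of the family `S` of random variables. -/
def IsEssInfSet {Ω : Type*} {mΩ : MeasurableSpace Ω} (μ : Measure Ω)
    (S : Set (Ω → ℝ)) (p : Ω → EReal) : Prop :=
  Measurable[mΩ] p ∧ (∀ f ∈ S, ∀ᵐ ω ∂μ, p ω ≤ (f ω : EReal)) ∧
    ∀ ζ : Ω → EReal, Measurable[mΩ] ζ → (∀ f ∈ S, ∀ᵐ ω ∂μ, ζ ω ≤ (f ω : EReal)) →
      ∀ᵐ ω ∂μ, ζ ω ≤ p ω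

/-- The set of super-hedging prices of the claim `Z` in the one-period market `(y, Y)`. -/
def Prices {Ω : Type*} (H : MeasurableSpace Ω) {mΩ : MeasurableSpace Ω} (μ : Measure Ω)
    {d : ℕ} (y Y : Ω → Fin d → ℝ) (Z : Ω → ℝ) : Set (Ω → ℝ) :=
  {x | Measurable[H] x ∧ ∃ θ : Ω → Fin d → ℝ, Measurable[H] θ ∧
    ∀ᵐ ω ∂μ, Z ω ≤ x ω + dotp (θ ω) fun i => Y ω i - y ω i}

/-- One-dimensional version of `Prices`. -/
def Prices1 {Ω : Type*} (H : MeasurableSpace Ω) {mΩ : MeasurableSpace Ω} (μ : Measure Ω)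
    (y Y : Ω → ℝ) (Z : Ω → ℝ) : Set (Ω → ℝ) :=
  {x | Measurable[H] x ∧ ∃ θ : Ω → ℝ, Measurable[H] θ ∧
    ∀ᵐ ω ∂μ, Z ω ≤ x ω + θ ω * (Y ω - y ω)}

/-- One-period super-hedging prices of the zero claim in the market extended by the
additional asset `(pZ, Z)`. -/
def PricesExt {Ω : Type*} (H : MeasurableSpace Ω) {mΩ : MeasurableSpace Ω} (μ : Measure Ω)
    {d : ℕ} (y Y : Ω → Fin d → ℝ) (Z pZ : Ω → ℝ) : Set (Ω → ℝ) :=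
  {x | Measurable[H] x ∧ ∃ α : Ω → ℝ, Measurable[H] α ∧ ∃ θ : Ω → Fin d → ℝ,
    Measurable[H] θ ∧
    ∀ᵐ ω ∂μ, 0 ≤ x ω + α ω * (Z ω - pZ ω) + dotp (θ ω) fun i => Y ω i - y ω i}

/-- The function `f = -g + δ_{D}` of the paper, valued in `EReal`. -/
def fObj {Ω : Type*} {d : ℕ} (g : Ω → (Fin d → ℝ) → ℝ) (D : Ω → Set (Fin d → ℝ))
    (ω : Ω) (z : Fin d → ℝ) : EReal :=
  if z ∈ D ω then ((-(g ω z) : ℝ) : EReal) else ⊤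

/-- Fenchel–Legendre conjugate of an `EReal`-valued function on `ℝ^d`. -/
def eConj {d : ℕ} (f : (Fin d → ℝ) → EReal) (x : Fin d → ℝ) : EReal :=
  ⨆ z : Fin d → ℝ, ((dotp x z : ℝ) : EReal) - f z

/-- Convex-analytic indicator function `δ_s`. -/
def indicatorE {E : Type*} (s : Set E) (x : E) : EReal := if x ∈ s then 0 else ⊤

/-- Relative concave envelope of `g` with respect to `D`. -/
def concEnv {d : ℕ} (g : (Fin d → ℝ) → ℝ) (D : Set (Fin d → ℝ)) (x : Fin d → ℝ) : EReal :=
  ⨅ v ∈ {v : (Fin d → ℝ) → ℝ | ConcaveOn ℝ univ v ∧ ∀ z ∈ D, g z ≤ v z}, ((v x : ℝ) : EReal)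

/-- Upper semicontinuous closure of an `EReal`-valued function. -/
def usClosure {E : Type*} [TopologicalSpace E] (F : E → EReal) (x : E) : EReal :=
  Filter.limsup F (nhds x)

/-- The slope `θ^*` of Corollary 2.19, with the conventions of the paper. -/
def thetaStar (g : ℝ → ℝ) (M I : ℝ) (S : EReal) : ℝ :=
  if S = (I : EReal) then 0 else if S = ⊤ then M
  else (g S.toReal - g I) / (S.toReal - I)

/-- Multi-period super-hedging prices at time `t` of the claim `g` paid at time `T`. -/
def PricesMulti {Ω : Type*} {mΩ : MeasurableSpace Ω} (𝓕 : ℕ → MeasurableSpace Ω)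
    (μ : Measure Ω) {d : ℕ} (S : ℕ → Ω → Fin d → ℝ) (t T : ℕ) (g : Ω → ℝ) :
    Set (Ω → ℝ) :=
  {x | Measurable[𝓕 t] x ∧ ∃ θ : ℕ → Ω → Fin d → ℝ, (∀ u, Measurable[𝓕 u] (θ u)) ∧
    ∃ ε : Ω → ℝ, Measurable[𝓕 T] ε ∧ (∀ᵐ ω ∂μ, 0 ≤ ε ω) ∧
    ∀ᵐ ω ∂μ, x ω + (∑ u ∈ Finset.Icc (t+1) T,
      dotp (θ (u-1) ω) fun i => S u ω i - S (u-1) ω i) - ε ω = g ω}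

/-- One-step super-hedging prices at time `t` of the (extended-real) claim `G`
paid at time `t+1`. -/
def OneStepPrices {Ω : Type*} {mΩ : MeasurableSpace Ω} (𝓕 : ℕ → MeasurableSpace Ω)
    (μ : Measure Ω) {d : ℕ} (S : ℕ → Ω → Fin d → ℝ) (t : ℕ) (G : Ω → EReal) :
    Set (Ω → ℝ) :=
  {x | Measurable[𝓕 t] x ∧ ∃ θ : Ω → Fin d → ℝ, Measurable[𝓕 t] θ ∧
    ∀ᵐ ω ∂μ, G ω ≤ ((x ω + dotp (θ ω) fun i => S (t+1) ω i - S t ω i : ℝ) : EReal)}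

/-- Multi-period super-hedging prices in the market extended by the additional asset `C`. -/
def PricesMultiExt {Ω : Type*} {mΩ : MeasurableSpace Ω} (𝓕 : ℕ → MeasurableSpace Ω)
    (μ : Measure Ω) {d : ℕ} (S : ℕ → Ω → Fin d → ℝ) (C : ℕ → Ω → ℝ) (t T : ℕ)
    (g : Ω → ℝ) : Set (Ω → ℝ) :=
  {x | Measurable[𝓕 t] x ∧ ∃ θ : ℕ → Ω → Fin d → ℝ, (∀ u, Measurable[𝓕 u] (θ u)) ∧
    ∃ α : ℕ → Ω → ℝ, (∀ u, Measurable[𝓕 u] (α u)) ∧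
    ∃ ε : Ω → ℝ, Measurable[𝓕 T] ε ∧ (∀ᵐ ω ∂μ, 0 ≤ ε ω) ∧
    ∀ᵐ ω ∂μ, x ω + (∑ u ∈ Finset.Icc (t+1) T,
      ((dotp (θ (u-1) ω) fun i => S u ω i - S (u-1) ω i) +
        α (u-1) ω * (C u ω - C (u-1) ω))) - ε ω = g ω}

/-- The set `R_t^T` of claims super-replicable at zero cost, one-dimensional case. -/
def RsetM {Ω : Type*} {mΩ : MeasurableSpace Ω} (𝓕 : ℕ → MeasurableSpace Ω)
    (μ : Measure Ω) (S : ℕ → Ω → ℝ) (t T : ℕ) : Set (Ω → ℝ) :=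
  {X | ∃ θ : ℕ → Ω → ℝ, (∀ u, Measurable[𝓕 u] (θ u)) ∧
    ∃ ε : Ω → ℝ, Measurable[𝓕 T] ε ∧ (∀ᵐ ω ∂μ, 0 ≤ ε ω) ∧
    ∀ᵐ ω ∂μ, X ω = (∑ u ∈ Finset.Icc (t+1) T, θ (u-1) ω * (S u ω - S (u-1) ω)) - ε ω}

/-- Closure with respect to convergence in probability. -/
def closureP {Ω : Type*} {mΩ : MeasurableSpace Ω} (μ : Measure Ω) (A : Set (Ω → ℝ)) :
    Set (Ω → ℝ) :=
  {X | ∃ f : ℕ → Ω → ℝ, (∀ n, f n ∈ A) ∧ TendstoInMeasure μ f Filter.atTop X}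

section AuxProof

open TopologicalSpace ProbabilityTheory

variable {Ω : Type*} {E : Type*} [TopologicalSpace E] [MeasurableSpace E]
  [OpensMeasurableSpace E]

lemma aux_mem_condSupp_iff {κ : Ω → Measure E} {ω : Ω} (hprob : IsProbabilityMeasure (κ ω))
    {x : E} : x ∈ condSupp κ ω ↔ ∀ U : Set E, IsOpen U → x ∈ U → κ ω U ≠ 0 := by
  constructor
  · intro hx U hU hxU h0
    have h1 : κ ω Uᶜ = 1 := by
      rw [measure_compl hU.measurableSet (measure_ne_top _ _), h0, measure_univ, tsub_zero]
    have : x ∈ Uᶜ := hx Uᶜ ⟨hU.isClosed_compl, h1⟩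
    exact this hxU
  · intro hx A hA
    by_contra hxA
    have h0 : κ ω Aᶜ = 0 := by
      rw [measure_compl hA.1.measurableSet (measure_ne_top _ _), hA.2, measure_univ, tsub_self]
    exact hx Aᶜ hA.1.isOpen_compl hxA h0

lemma aux_condSupp_compl_null [SecondCountableTopology E] {κ : Ω → Measure E} {ω : Ω}
    (hprob : IsProbabilityMeasure (κ ω)) : κ ω (condSupp κ ω)ᶜ = 0 := by
  have hsub : (condSupp κ ω)ᶜ ⊆ ⋃ U ∈ {U ∈ countableBasis E | κ ω U = 0}, U := by
    intro x hx
    rw [mem_compl_iff, aux_mem_condSupp_iff hprob] at hx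
    push_neg at hx
    obtain ⟨U, hU, hxU, h0⟩ := hx
    obtain ⟨V, hVB, hxV, hVU⟩ := (isBasis_countableBasis E).exists_subset_of_mem_open hxU hU
    exact mem_biUnion ⟨hVB, measure_mono_null hVU h0⟩ hxV
  refine measure_mono_null hsub ?_
  exact (measure_biUnion_null_iff ((countable_countableBasis E).mono (sep_subset _ _))).2
    fun U hU => hU.2

lemma aux_condSupp_full [SecondCountableTopology E] {κ : Ω → Measure E} {ω : Ω}
    (hprob : IsProbabilityMeasure (κ ω)) : κ ω (condSupp κ ω) = 1 := by
  have hm : MeasurableSet (condSupp κ ω) :=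
    (isClosed_sInter fun A hA => hA.1).measurableSet
  have := measure_compl hm (measure_ne_top (κ ω) _)
  rw [aux_condSupp_compl_null hprob, measure_univ] at this
  have h1 : κ ω (condSupp κ ω) ≤ 1 := prob_le_one
  rcases lt_or_eq_of_le h1 with h | h
  · exfalso
    have := this.symm
    rw [tsub_eq_zero_iff_le] at this
    exact absurd this (not_le.2 h)
  · exact h

lemma aux_graph_measurable [SecondCountableTopology E] (H : MeasurableSpace Ω)
    {κ : Ω → Measure E} (hprob : ∀ ω, IsProbabilityMeasure (κ ω))
    (hmeasκ : ∀ A : Set E, MeasurableSet A → Measurable[H] fun ω => κ ω A) :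
    MeasurableSet[H.prod ‹MeasurableSpace E›] {p : Ω × E | p.2 ∈ condSupp κ p.1} := by
  have hEq : {p : Ω × E | p.2 ∈ condSupp κ p.1}ᶜ =
      ⋃ U ∈ countableBasis E, ({ω | κ ω U = 0} ×ˢ U) := by
    ext p
    simp only [mem_compl_iff, mem_setOf_eq, mem_iUnion, mem_prod, exists_prop]
    constructor
    · intro hp
      rw [aux_mem_condSupp_iff (hprob p.1)] at hp; push_neg at hp
      obtain ⟨U, hU, hxU, h0⟩ := hp
      obtain ⟨V, hVB, hxV, hVU⟩ := (isBasis_countableBasis E).exists_subset_of_mem_open hxU hU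
      exact ⟨V, hVB, measure_mono_null hVU h0, hxV⟩
    · rintro ⟨U, hUB, h0, hxU⟩
      rw [aux_mem_condSupp_iff (hprob p.1)]
      push_neg
      exact ⟨U, isOpen_of_mem_countableBasis hUB, hxU, h0⟩
  rw [← compl_compl {p : Ω × E | p.2 ∈ condSupp κ p.1}]
  refine MeasurableSet.compl ?_
  rw [hEq]
  refine MeasurableSet.biUnion (countable_countableBasis E) fun U hU => ?_
  exact @MeasurableSet.prod Ω E H _ _ _
    (hmeasκ U (isOpen_of_mem_countableBasis hU).measurableSet (measurableSet_singleton 0))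
    (isOpen_of_mem_countableBasis hU).measurableSet

lemma aux_key (H : MeasurableSpace Ω) {mΩ : MeasurableSpace Ω} (hHF : H ≤ mΩ)
    (μ : Measure Ω) [IsProbabilityMeasure μ] {X : Ω → E} (hX : Measurable X)
    {κ : Ω → Measure E} (hκ : CondLaw H μ X κ) {C : Set (Ω × E)}
    (hC : MeasurableSet[H.prod ‹MeasurableSpace E›] C) :
    ∫⁻ ω, κ ω (Prod.mk ω ⁻¹' C) ∂μ = μ ((fun ω => (ω, X ω)) ⁻¹' C) := by
  let k : @Kernel Ω E H _ :=
    @Kernel.mk Ω E H _ κ (@Measure.measurable_of_measurable_coe E Ω _ H κ hκ.meas)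
  haveI hk : @IsMarkovKernel Ω E H _ k := ⟨fun ω => by exact hκ.isProb ω⟩
  haveI : IsProbabilityMeasure (μ.trim hHF) :=
    ⟨by rw [trim_measurableSet_eq hHF MeasurableSet.univ]; exact measure_univ⟩
  have hXm : @Measurable Ω (Ω × E) mΩ (H.prod ‹MeasurableSpace E›) fun ω => (ω, X ω) := by
    exact Measurable.prodMk (measurable_id'' hHF) hX
  have hprodMS : ∀ {B : Set Ω} {A : Set E}, MeasurableSet[H] B → MeasurableSet A →
      MeasurableSet[H.prod ‹MeasurableSpace E›] (B ×ˢ A) := fun hB hA => hB.prod hA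
  have hmap : ∀ {s : Set (Ω × E)}, MeasurableSet[H.prod ‹MeasurableSpace E›] s →
      @Measure.map Ω (Ω × E) mΩ (H.prod ‹MeasurableSpace E›) (fun ω => (ω, X ω)) μ s
        = μ ((fun ω => (ω, X ω)) ⁻¹' s) := fun hs => Measure.map_apply hXm hs
  have hmain : @Measure.compProd Ω E H _ (μ.trim hHF) k =
      @Measure.map Ω (Ω × E) mΩ (H.prod ‹MeasurableSpace E›) (fun ω => (ω, X ω)) μ := by
    refine @ext_of_generate_finite (Ω × E) (H.prod ‹MeasurableSpace E›) _ _
      (image2 (· ×ˢ ·) { s : Set Ω | MeasurableSet[H] s } { t : Set E | MeasurableSet t })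
      (@generateFrom_prod Ω E H _).symm (@isPiSystem_prod Ω E H _) ?_ ?_ ?_
    · infer_instance
    · rintro s ⟨B, hB, A, hA, rfl⟩
      rw [@Measure.compProd_apply_prod Ω E H _ _ _ _ _ B A hB hA, hmap (hprodMS hB hA)]
      have hpre : (fun ω => (ω, X ω)) ⁻¹' (B ×ˢ A) = B ∩ X ⁻¹' A := by
        ext ω; simp [Set.mem_prod]
      rw [hpre, ← hκ.law A hA B hB]
      have hint : @Measurable Ω ℝ≥0∞ H _ (B.indicator fun ω => κ ω A) :=
        (hκ.meas A hA).indicator hB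
      calc ∫⁻ ω in B, κ ω A ∂(μ.trim hHF)
          = ∫⁻ ω, (B.indicator fun ω => κ ω A) ω ∂(μ.trim hHF) := by
            rw [lintegral_indicator hB]
        _ = ∫⁻ ω, (B.indicator fun ω => κ ω A) ω ∂μ := lintegral_trim hHF hint
        _ = ∫⁻ ω in B, κ ω A ∂μ := by rw [lintegral_indicator (hHF _ hB)]
    · rw [@Measure.compProd_apply_univ Ω E H _ _ _ _ _, hmap MeasurableSet.univ]
      simp [measure_univ, trim_measurableSet_eq hHF MeasurableSet.univ]
  rw [← hmap hC, ← hmain, @Measure.compProd_apply Ω E H _ _ _ _ _ _ hC]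
  exact (lintegral_trim hHF (@Kernel.measurable_kernel_prodMk_left Ω E H _ k _ _ hC)).symm

end AuxProof

/-- the conditional essential supremum of `h(·, X(·))` equals the
supremum of `h(·, x)` over the conditional support of `X`, almost surely. -/
theorem condEssSup_eq_sup_condSupp
    {Ω : Type*} (H : MeasurableSpace Ω) [mΩ : MeasurableSpace Ω] (μ : Measure Ω)
    [IsProbabilityMeasure μ] [μ.IsComplete] (hHF : H ≤ mΩ)
    (hHcomp : ∀ s : Set Ω, μ s = 0 → MeasurableSet[H] s)
    {d : ℕ} (X : Ω → Fin d → ℝ) (hX : Measurable[mΩ] X)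
    (κ : Ω → Measure (Fin d → ℝ)) (hκ : CondLaw H μ X κ)
    (hdom : ∀ ω, (condSupp κ ω).Nonempty)
    (h : Ω → (Fin d → ℝ) → ℝ)
    (hmeas : Measurable[H.prod inferInstance] fun p : Ω × (Fin d → ℝ) => h p.1 p.2)
    (hlsc : ∀ ω, LowerSemicontinuous (h ω))
    (γ : Ω → EReal) (hγ : IsCondEssSup H μ (fun ω => h ω (X ω)) γ) :
    ∀ᵐ ω ∂μ, γ ω = sSup ((fun x => ((h ω x : ℝ) : EReal)) '' condSupp κ ω) := by
  classical
  have hprob : ∀ ω', IsProbabilityMeasure (κ ω') := hκ.isProb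
  set G : Ω → EReal := fun ω => sSup ((fun x => ((h ω x : ℝ) : EReal)) '' condSupp κ ω)
    with hGdef
  let k : @ProbabilityTheory.Kernel Ω (Fin d → ℝ) H _ :=
    @ProbabilityTheory.Kernel.mk Ω (Fin d → ℝ) H _ κ
      (@Measure.measurable_of_measurable_coe (Fin d → ℝ) Ω _ H κ hκ.meas)
  haveI hk : @ProbabilityTheory.IsMarkovKernel Ω (Fin d → ℝ) H _ k :=
    ⟨fun ω => by exact hκ.isProb ω⟩
  have hopen : ∀ ω (c : ℝ), IsOpen {y : Fin d → ℝ | c < h ω y} :=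
    fun ω c => lowerSemicontinuous_iff_isOpen_preimage.1 (hlsc ω) c
  -- pointwise rational formula for G
  have hGeq : ∀ ω, G ω =
      ⨆ q : ℚ, (if 0 < κ ω {x | (q : ℝ) < h ω x} then (((q : ℝ) : ℝ) : EReal) else ⊥) := by
    intro ω
    apply le_antisymm
    · refine sSup_le ?_
      rintro b ⟨x, hxS, rfl⟩
      refine le_of_forall_lt fun c hc => ?_
      obtain ⟨q, hcq, hqx⟩ := EReal.exists_rat_btwn_of_lt hc
      have hxU : x ∈ {y | (q : ℝ) < h ω y} := by
        simpa using (EReal.coe_lt_coe_iff.1 hqx)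
      have hpos : 0 < κ ω {y | (q : ℝ) < h ω y} :=
        pos_iff_ne_zero.mpr ((aux_mem_condSupp_iff (hprob ω)).1 hxS _ (hopen ω q) hxU)
      refine hcq.trans_le (le_trans ?_ (le_iSup _ q))
      rw [if_pos hpos]
    · refine iSup_le fun q => ?_
      split_ifs with hpos
      · have hne : κ ω (condSupp κ ω ∩ {x | (q : ℝ) < h ω x}) ≠ 0 := by
          intro h0
          have hsub : {x | (q : ℝ) < h ω x} ⊆
              (condSupp κ ω ∩ {x | (q : ℝ) < h ω x}) ∪ (condSupp κ ω)ᶜ := by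
            intro x hx
            by_cases hxS : x ∈ condSupp κ ω
            · exact Or.inl ⟨hxS, hx⟩
            · exact Or.inr hxS
          have hle : κ ω {x | (q : ℝ) < h ω x} ≤ 0 := by
            calc κ ω {x | (q : ℝ) < h ω x}
                ≤ κ ω ((condSupp κ ω ∩ {x | (q : ℝ) < h ω x}) ∪ (condSupp κ ω)ᶜ) :=
                  measure_mono hsub
              _ ≤ κ ω (condSupp κ ω ∩ {x | (q : ℝ) < h ω x}) + κ ω (condSupp κ ω)ᶜ :=
                  measure_union_le _ _
              _ = 0 := by rw [h0, aux_condSupp_compl_null (hprob ω), add_zero]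
          exact absurd (le_antisymm hle zero_le) (ne_of_gt hpos)
        obtain ⟨x, hxS, hxq⟩ := nonempty_of_measure_ne_zero hne
        calc (((q : ℝ) : ℝ) : EReal) ≤ ((h ω x : ℝ) : EReal) := by
              exact_mod_cast le_of_lt hxq
          _ ≤ G ω := le_sSup ⟨x, hxS, rfl⟩
      · exact bot_le
  -- measurability of G
  have hGmeas : Measurable[H] G := by
    have hGfun : G = fun ω => ⨆ q : ℚ,
        (if 0 < κ ω {x | (q : ℝ) < h ω x} then (((q : ℝ) : ℝ) : EReal) else ⊥) := funext hGeq
    rw [hGfun]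
    refine Measurable.iSup fun q => ?_
    have hCq : MeasurableSet[H.prod inferInstance]
        {p : Ω × (Fin d → ℝ) | (q : ℝ) < h p.1 p.2} :=
      measurableSet_lt measurable_const hmeas
    have hkm : Measurable[H] fun ω => κ ω {x | (q : ℝ) < h ω x} :=
      @ProbabilityTheory.Kernel.measurable_kernel_prodMk_left Ω (Fin d → ℝ) H _ k _ _ hCq
    exact Measurable.ite (hkm measurableSet_Ioi) measurable_const measurable_const
  -- X belongs to the conditional support a.s.
  have hXm : @Measurable Ω (Ω × (Fin d → ℝ)) mΩ (H.prod (inferInstance : MeasurableSpace (Fin d → ℝ)))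
      fun ω => (ω, X ω) := by
    exact Measurable.prodMk (measurable_id'' hHF) hX
  have hGraph : MeasurableSet[H.prod (inferInstance : MeasurableSpace (Fin d → ℝ))]
      {p : Ω × (Fin d → ℝ) | p.2 ∈ condSupp κ p.1} :=
    aux_graph_measurable H hprob hκ.meas
  have hXsupp : ∀ᵐ ω ∂μ, X ω ∈ condSupp κ ω := by
    have h1 : μ ((fun ω => (ω, X ω)) ⁻¹' {p : Ω × (Fin d → ℝ) | p.2 ∈ condSupp κ p.1}) = 1 := by
      rw [← aux_key H hHF μ hX hκ hGraph]
      have hone : ∀ ω, κ ω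
          (Prod.mk ω ⁻¹' {p : Ω × (Fin d → ℝ) | p.2 ∈ condSupp κ p.1}) = 1 := fun ω => by
        have hss : Prod.mk ω ⁻¹' {p : Ω × (Fin d → ℝ) | p.2 ∈ condSupp κ p.1}
            = condSupp κ ω := rfl
        rw [hss]
        exact aux_condSupp_full (hprob ω)
      simp only [hone]
      simp
    have hms : MeasurableSet
        ((fun ω => (ω, X ω)) ⁻¹' {p : Ω × (Fin d → ℝ) | p.2 ∈ condSupp κ p.1}) := hXm hGraph
    rw [ae_iff]
    have hcompl : {ω | ¬ X ω ∈ condSupp κ ω} =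
        ((fun ω => (ω, X ω)) ⁻¹' {p : Ω × (Fin d → ℝ) | p.2 ∈ condSupp κ p.1})ᶜ := rfl
    rw [hcompl, measure_compl hms (measure_ne_top _ _), h1, measure_univ, tsub_self]
  -- γ ≤ G a.s.
  have hle1 : ∀ᵐ ω ∂μ, γ ω ≤ G ω := by
    refine hγ.2.2 G hGmeas ?_
    filter_upwards [hXsupp] with ω hω
    exact le_sSup ⟨X ω, hω, rfl⟩
  -- G ≤ γ a.s.
  have hC2 : MeasurableSet[H.prod (inferInstance : MeasurableSpace (Fin d → ℝ))]
      {p : Ω × (Fin d → ℝ) | γ p.1 < ((h p.1 p.2 : ℝ) : EReal)} := by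
    refine measurableSet_lt ?_ ?_
    · exact hγ.1.comp (@measurable_fst Ω (Fin d → ℝ) H _)
    · exact measurable_coe_real_ereal.comp hmeas
  have hnull : ∀ᵐ ω ∂μ, κ ω {x | γ ω < ((h ω x : ℝ) : EReal)} = 0 := by
    have h0 : μ ((fun ω => (ω, X ω)) ⁻¹'
        {p : Ω × (Fin d → ℝ) | γ p.1 < ((h p.1 p.2 : ℝ) : EReal)}) = 0 := by
      have hae := hγ.2.1
      rw [ae_iff] at hae
      have hset : ((fun ω => (ω, X ω)) ⁻¹'
          {p : Ω × (Fin d → ℝ) | γ p.1 < ((h p.1 p.2 : ℝ) : EReal)}) =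
          {ω | ¬ ((h ω (X ω) : ℝ) : EReal) ≤ γ ω} := by
        ext ω
        simp [not_le]
      rw [hset]
      exact hae
    have hint := aux_key H hHF μ hX hκ hC2
    rw [h0] at hint
    have hmeasf : Measurable fun ω => κ ω (Prod.mk ω ⁻¹'
        {p : Ω × (Fin d → ℝ) | γ p.1 < ((h p.1 p.2 : ℝ) : EReal)}) :=
      (@ProbabilityTheory.Kernel.measurable_kernel_prodMk_left Ω (Fin d → ℝ) H _ k _ _
        hC2).mono hHF le_rfl
    have := (lintegral_eq_zero_iff hmeasf).1 hint
    filter_upwards [this] with ω hω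
    exact hω
  have hle2 : ∀ᵐ ω ∂μ, G ω ≤ γ ω := by
    filter_upwards [hnull] with ω h0
    refine sSup_le ?_
    rintro b ⟨x, hxS, rfl⟩
    by_contra hlt
    push_neg at hlt
    obtain ⟨q, hγq, hqx⟩ := EReal.exists_rat_btwn_of_lt hlt
    have hxU : x ∈ {y | (q : ℝ) < h ω y} := by
      simpa using (EReal.coe_lt_coe_iff.1 hqx)
    have hsub : {y | (q : ℝ) < h ω y} ⊆ {y | γ ω < ((h ω y : ℝ) : EReal)} := by
      intro y hy
      exact hγq.trans (EReal.coe_lt_coe_iff.2 hy)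
    exact ((aux_mem_condSupp_iff (hprob ω)).1 hxS _ (hopen ω q) hxU)
      (measure_mono_null hsub h0)
  filter_upwards [hle1, hle2] with ω h1 h2
  exact le_antisymm h1 h2
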